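/- Let G(y) = 13y²(1 − y)⁶ + 9y³(1 − y)² for y ∈ [0,1]. Then ∫₀¹ G(s²) ds = ∫₀¹ G(1 − s²) ds. -/
import Mathlib

open Polynomial in
private lemma int_of_poly (p : ℝ[X]) (f : ℝ → ℝ)
    (hf : ∀ s, f s = p.derivative.eval s) :
    (∫ s in (0:ℝ)..1, f s) = p.eval 1 - p.eval 0 := by
  have h : (∫ s in (0:ℝ)..1, f s) = ∫ s in (0:ℝ)..1, p.derivative.eval s := by
    apply intervalIntegral.integral_congr
    intro s _; exact hf s
  rw [h]
  exact intervalIntegral.integral_eq_sub_of_hasDerivAt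
    (fun x _ => p.hasDerivAt x)
    ((p.derivative.continuous_aeval).intervalIntegrable 0 1)

/-- For `G(y) = 13y²(1 − y)⁶ + 9y³(1 − y)²`, one has
`∫₀¹ G(s²) ds = ∫₀¹ G(1 − s²) ds`, so the associated asymmetrical solid of revolution
has turn-up number `1`. -/
theorem asymmetric_clepsydra_G :
    (∫ s in (0:ℝ)..1,
      (13 * (s ^ 2) ^ 2 * (1 - s ^ 2) ^ 6 + 9 * (s ^ 2) ^ 3 * (1 - s ^ 2) ^ 2)) =
    (∫ s in (0:ℝ)..1,
      (13 * (1 - s ^ 2) ^ 2 * (1 - (1 - s ^ 2)) ^ 6 +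
        9 * (1 - s ^ 2) ^ 3 * (1 - (1 - s ^ 2)) ^ 2)) := by
  have hL := int_of_poly
    (Polynomial.C ((13:ℝ)/5) * Polynomial.X ^ 5 + Polynomial.C ((-69:ℝ)/7) * Polynomial.X ^ 7 +
      Polynomial.C ((59:ℝ)/3) * Polynomial.X ^ 9 + Polynomial.C ((-251:ℝ)/11) * Polynomial.X ^ 11 +
      Polynomial.C ((15:ℝ)/1) * Polynomial.X ^ 13 + Polynomial.C ((-26:ℝ)/5) * Polynomial.X ^ 15 +
      Polynomial.C ((13:ℝ)/17) * Polynomial.X ^ 17)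
    (fun s => 13 * (s ^ 2) ^ 2 * (1 - s ^ 2) ^ 6 + 9 * (s ^ 2) ^ 3 * (1 - s ^ 2) ^ 2)
    (by intro s; simp; ring)
  have hR := int_of_poly
    (Polynomial.C ((9:ℝ)/5) * Polynomial.X ^ 5 + Polynomial.C ((-27:ℝ)/7) * Polynomial.X ^ 7 +
      Polynomial.C ((3:ℝ)/1) * Polynomial.X ^ 9 + Polynomial.C ((-9:ℝ)/11) * Polynomial.X ^ 11 +
      Polynomial.C ((1:ℝ)/1) * Polynomial.X ^ 13 + Polynomial.C ((-26:ℝ)/15) * Polynomial.X ^ 15 +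
      Polynomial.C ((13:ℝ)/17) * Polynomial.X ^ 17)
    (fun s => 13 * (1 - s ^ 2) ^ 2 * (1 - (1 - s ^ 2)) ^ 6 +
        9 * (1 - s ^ 2) ^ 3 * (1 - (1 - s ^ 2)) ^ 2)
    (by intro s; simp; ring)
  rw [hL, hR]
  norm_num
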